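/- The code map c : IndexedForests → Codes (finitely supported sequences of nonnegative integers) sending a forest F to the sequence c(F) where c(F)_i counts the internal nodes v of F whose leftmost leaf descendant is labeled i, is a bijection. -/
import Mathlib

/-- Rooted plane binary trees. -/
inductive PBTree : Type
  | leaf : PBTree
  | node : PBTree → PBTree → PBTree
deriving DecidableEq

/-- Number of leaves. -/
def PBTree.nleaves : PBTree → ℕ
  | .leaf => 1
  | .node l r => l.nleaves + r.nleaves

/-- An indexed forest: an infinite sequence of plane binary trees, all but
finitely many of which are trivial. -/
def IsForest (F : ℕ → PBTree) : Prop := {i | F i ≠ PBTree.leaf}.Finite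

/-- The label (0-based) of the leftmost leaf of the `i`-th tree of the forest:
leaves of the whole forest are labeled `0, 1, 2, …` from left to right. -/
def offset (F : ℕ → PBTree) (i : ℕ) : ℕ :=
  ∑ j ∈ Finset.range i, (F j).nleaves

/-- The code of a single tree whose leftmost leaf has label `k`: each internal
node `v` contributes `1` at the index `ρ(v)`, the label of the leaf reached
from `v` by descending along left edges. -/
noncomputable def codeT : PBTree → ℕ → (ℕ →₀ ℕ)
  | .leaf, _ => 0
  | .node l r, k => Finsupp.single k 1 + codeT l k + codeT r (k + l.nleaves)

/-- The code of an indexed forest. -/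
noncomputable def codeF (F : ℕ → PBTree) : ℕ →₀ ℕ :=
  ∑ᶠ i, codeT (F i) (offset F i)

/-! ### Auxiliary machinery -/

open Finsupp Finset

/-- prepend a tree to a forest -/
def consF (t : PBTree) (G : ℕ → PBTree) : ℕ → PBTree
  | 0 => t
  | (i+1) => G i

/-- tail of a forest -/
def tailF (F : ℕ → PBTree) : ℕ → PBTree := fun i => F (i + 1)

lemma consF_tailF (F : ℕ → PBTree) : consF (F 0) (tailF F) = F := by
  funext i; cases i <;> rfl

/-- the sum of the values of a code -/
def S (c : ℕ →₀ ℕ) : ℕ := c.sum fun _ n => n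

lemma S_add (a b : ℕ →₀ ℕ) : S (a + b) = S a + S b := by
  simpa [S] using Finsupp.sum_add_index' (h := fun (_ : ℕ) (n : ℕ) => n)
    (fun _ => rfl) (fun _ _ _ => rfl)

lemma support_subset_add_left (a b : ℕ →₀ ℕ) : b.support ⊆ (a + b).support := by
  intro x hx
  simp only [Finsupp.mem_support_iff, Finsupp.add_apply] at *
  omega

/-- the measure used for decoding -/
def mu (c : ℕ →₀ ℕ) : ℕ := S c + c.support.sup id

lemma sub_single_add (c : ℕ →₀ ℕ) (h : c 0 ≠ 0) :
    (c - Finsupp.single 0 1) + Finsupp.single 0 1 = c := by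
  ext a
  simp only [Finsupp.add_apply, Finsupp.tsub_apply, Finsupp.single_apply]
  rcases a with _ | a <;> simp <;> omega

lemma mu_sub_single (c : ℕ →₀ ℕ) (h : c 0 ≠ 0) :
    mu (c - Finsupp.single 0 1) < mu c := by
  have h1 : S c = S (c - Finsupp.single 0 1) + 1 := by
    conv_lhs => rw [← sub_single_add c h]
    rw [S_add]
    simp [S, Finsupp.sum_single_index]
  have h2 : (c - Finsupp.single 0 1).support ⊆ c.support := by
    intro x hx
    simp only [Finsupp.mem_support_iff, Finsupp.tsub_apply] at *
    omega
  have := Finset.sup_mono (f := id) h2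
  unfold mu
  omega

/-- shift a code down by one -/
noncomputable def shiftD (c : ℕ →₀ ℕ) : ℕ →₀ ℕ :=
  Finsupp.comapDomain Nat.succ c (Nat.succ_injective.injOn)

lemma shiftD_apply (c : ℕ →₀ ℕ) (a : ℕ) : shiftD c a = c (a + 1) := rfl

lemma mapDomain_succ_apply_zero (d : ℕ →₀ ℕ) :
    Finsupp.mapDomain Nat.succ d 0 = 0 :=
  Finsupp.mapDomain_notin_range _ _ (by simp [Set.range, Nat.succ_ne_zero])

lemma mapDomain_succ_apply_succ (d : ℕ →₀ ℕ) (a : ℕ) :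
    Finsupp.mapDomain Nat.succ d (a + 1) = d a :=
  Finsupp.mapDomain_apply Nat.succ_injective _ _

lemma mapDomain_shiftD (c : ℕ →₀ ℕ) (h : c 0 = 0) :
    Finsupp.mapDomain Nat.succ (shiftD c) = c := by
  ext a
  rcases a with _ | a
  · rw [mapDomain_succ_apply_zero, h]
  · rw [mapDomain_succ_apply_succ, shiftD_apply]

lemma shiftD_mapDomain (d : ℕ →₀ ℕ) : shiftD (Finsupp.mapDomain Nat.succ d) = d := by
  ext a
  rw [shiftD_apply, mapDomain_succ_apply_succ]

lemma S_mapDomain (d : ℕ →₀ ℕ) : S (Finsupp.mapDomain Nat.succ d) = S d :=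
  Finsupp.sum_mapDomain_index (fun _ => rfl) (fun _ _ _ => rfl)

lemma sup_mapDomain (d : ℕ →₀ ℕ) (hd : d ≠ 0) :
    (Finsupp.mapDomain Nat.succ d).support.sup id = d.support.sup id + 1 := by
  classical
  rw [Finsupp.mapDomain_support_of_injective Nat.succ_injective]
  have hne : d.support.Nonempty := Finsupp.support_nonempty_iff.2 hd
  apply le_antisymm
  · apply Finset.sup_le
    intro b hb
    simp only [Finset.mem_image] at hb
    obtain ⟨a, ha, rfl⟩ := hb
    have : a ≤ d.support.sup id := Finset.le_sup (f := id) ha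
    simpa [Nat.succ_eq_add_one] using Nat.succ_le_succ this
  · obtain ⟨m, hm, hmax⟩ := Finset.exists_mem_eq_sup d.support hne id
    have : id (Nat.succ m) ≤ (Finset.image Nat.succ d.support).sup id :=
      Finset.le_sup (Finset.mem_image_of_mem _ hm)
    simp only [id] at this hmax
    omega

lemma mu_mapDomain (d : ℕ →₀ ℕ) (hd : d ≠ 0) :
    mu d < mu (Finsupp.mapDomain Nat.succ d) := by
  unfold mu
  rw [S_mapDomain, sup_mapDomain d hd]
  omega

lemma mu_shiftD (c : ℕ →₀ ℕ) (hc : c ≠ 0) (h0 : c 0 = 0) :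
    mu (shiftD c) < mu c := by
  have hd : shiftD c ≠ 0 := by
    intro h
    apply hc
    rw [← mapDomain_shiftD c h0, h]
    simp
  have := mu_mapDomain (shiftD c) hd
  rwa [mapDomain_shiftD c h0] at this

/-! ### codeF basics -/

lemma exists_bound {F : ℕ → PBTree} (hF : IsForest F) :
    ∃ N, ∀ i, N ≤ i → F i = PBTree.leaf := by
  obtain ⟨N, hN⟩ := hF.bddAbove
  refine ⟨N + 1, fun i hi => ?_⟩
  by_contra h
  have := hN (Set.mem_setOf.2 h)
  omega

lemma codeT_leaf (k : ℕ) : codeT PBTree.leaf k = 0 := rfl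

lemma codeF_eq {F : ℕ → PBTree} {N : ℕ} (hN : ∀ i, N ≤ i → F i = PBTree.leaf) :
    codeF F = ∑ i ∈ Finset.range N, codeT (F i) (offset F i) := by
  apply finsum_eq_sum_of_support_subset
  intro i hi
  simp only [Function.mem_support] at hi
  simp only [Finset.coe_range, Set.mem_Iio]
  by_contra h
  exact hi (by rw [hN i (by omega)]; rfl)

lemma isForest_const : IsForest (fun _ => PBTree.leaf) := by
  simp [IsForest]

lemma isForest_tail {F : ℕ → PBTree} (hF : IsForest F) : IsForest (tailF F) := by
  have : {i | tailF F i ≠ PBTree.leaf} ⊆ (fun i => i + 1) ⁻¹' {i | F i ≠ PBTree.leaf} := by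
    intro i hi; exact hi
  exact (hF.preimage (add_left_injective 1).injOn).subset this

lemma isForest_cons {t : PBTree} {G : ℕ → PBTree} (hG : IsForest G) :
    IsForest (consF t G) := by
  have : {i | consF t G i ≠ PBTree.leaf} ⊆
      insert 0 ((fun i => i + 1) '' {i | G i ≠ PBTree.leaf}) := by
    intro i hi
    rcases i with _ | i
    · exact Set.mem_insert _ _
    · exact Set.mem_insert_of_mem _ ⟨i, hi, rfl⟩
  exact ((hG.image _).insert 0).subset this

lemma offset_zero (F : ℕ → PBTree) : offset F 0 = 0 := rfl

lemma offset_cons (t : PBTree) (G : ℕ → PBTree) (i : ℕ) :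
    offset (consF t G) (i + 1) = t.nleaves + offset G i := by
  unfold offset
  rw [Finset.sum_range_succ']
  simp [consF, add_comm]

lemma codeT_shift (t : PBTree) (k : ℕ) :
    codeT t (k + 1) = Finsupp.mapDomain Nat.succ (codeT t k) := by
  induction t generalizing k with
  | leaf => simp [codeT_leaf]
  | node l r ihl ihr =>
    show Finsupp.single (k+1) 1 + codeT l (k+1) + codeT r (k+1+l.nleaves) = _
    have : k + 1 + l.nleaves = (k + l.nleaves) + 1 := by omega
    rw [this, ihl, ihr, show codeT (PBTree.node l r) k =
      Finsupp.single k 1 + codeT l k + codeT r (k + l.nleaves) from rfl,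
      Finsupp.mapDomain_add, Finsupp.mapDomain_add, Finsupp.mapDomain_single]

lemma codeF_cons_leaf {G : ℕ → PBTree} (hG : IsForest G) :
    codeF (consF PBTree.leaf G) = Finsupp.mapDomain Nat.succ (codeF G) := by
  obtain ⟨N, hN⟩ := exists_bound hG
  have hN' : ∀ i, N + 1 ≤ i → consF PBTree.leaf G i = PBTree.leaf := by
    intro i hi
    rcases i with _ | i
    · rfl
    · exact hN i (by omega)
  rw [codeF_eq hN', codeF_eq hN, Finset.sum_range_succ']
  simp only [offset_cons, PBTree.nleaves]
  have : ∀ i, codeT (consF PBTree.leaf G (i+1)) (1 + offset G i)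
      = Finsupp.mapDomain Nat.succ (codeT (G i) (offset G i)) := by
    intro i
    rw [show consF PBTree.leaf G (i+1) = G i from rfl, add_comm 1, codeT_shift]
  rw [Finset.sum_congr rfl (fun i _ => this i)]
  simp only [codeT_leaf, ← Finsupp.mapDomain_finset_sum]
  show Finsupp.mapDomain Nat.succ _ + codeT PBTree.leaf _ = _
  rw [codeT_leaf, add_zero]

lemma codeF_cons_node {l r : PBTree} {G : ℕ → PBTree} (hG : IsForest G) :
    codeF (consF (PBTree.node l r) G) =
      Finsupp.single 0 1 + codeF (consF l (consF r G)) := by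
  obtain ⟨N, hN⟩ := exists_bound hG
  have hN1 : ∀ i, N + 1 ≤ i → consF (PBTree.node l r) G i = PBTree.leaf := by
    intro i hi; rcases i with _ | i
    · omega
    · exact hN i (by omega)
  have hN2 : ∀ i, N + 2 ≤ i → consF l (consF r G) i = PBTree.leaf := by
    intro i hi; rcases i with _ | (_ | i)
    · omega
    · omega
    · exact hN i (by omega)
  rw [codeF_eq hN1, codeF_eq hN2, Finset.sum_range_succ', Finset.sum_range_succ',
    Finset.sum_range_succ']
  have off1 : ∀ i, offset (consF (PBTree.node l r) G) (i + 1)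
      = l.nleaves + r.nleaves + offset G i := by
    intro i; rw [offset_cons]; rfl
  have off2 : ∀ i, offset (consF l (consF r G)) (i + 1 + 1)
      = l.nleaves + r.nleaves + offset G i := by
    intro i
    rw [offset_cons, offset_cons, ← add_assoc]
  have hterm : ∀ i, codeT (consF (PBTree.node l r) G (i+1))
      (offset (consF (PBTree.node l r) G) (i+1))
      = codeT (consF l (consF r G) (i+1+1)) (offset (consF l (consF r G)) (i+1+1)) := by
    intro i
    rw [off1, off2]; rfl
  rw [Finset.sum_congr rfl (fun i _ => hterm i)]
  show _ + codeT (PBTree.node l r) (offset _ 0) = _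
  rw [offset_zero, offset_zero, offset_cons, offset_zero]
  show _ + (Finsupp.single 0 1 + codeT l 0 + codeT r (0 + l.nleaves)) = _
  show _ = Finsupp.single 0 1 + (_ + codeT r (l.nleaves + 0) + codeT l 0)
  rw [zero_add, add_zero]
  abel

lemma codeT_apply_self_pos {l r : PBTree} (k : ℕ) :
    1 ≤ (codeT (PBTree.node l r) k) k := by
  show 1 ≤ ((Finsupp.single k 1 + codeT l k + codeT r (k + l.nleaves) : ℕ →₀ ℕ)) k
  simp only [Finsupp.add_apply, Finsupp.single_eq_same]
  omega

lemma codeF_apply_offset_pos {F : ℕ → PBTree} (hF : IsForest F) {l r : PBTree}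
    {jj : ℕ} (hj : F jj = PBTree.node l r) :
    1 ≤ (codeF F) (offset F jj) := by
  obtain ⟨N, hN⟩ := exists_bound hF
  have hjN : jj < N + jj + 1 := by omega
  have hN' : ∀ i, N + jj + 1 ≤ i → F i = PBTree.leaf := fun i hi => hN i (by omega)
  rw [codeF_eq hN', Finsupp.finset_sum_apply]
  calc 1 ≤ (codeT (F jj) (offset F jj)) (offset F jj) := by
        rw [hj]; exact codeT_apply_self_pos _
    _ ≤ _ := Finset.single_le_sum (f := fun i => (codeT (F i) (offset F i)) (offset F jj))
        (fun _ _ => Nat.zero_le _) (Finset.mem_range.2 hjN)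

lemma codeF_eq_zero {F : ℕ → PBTree} (hF : IsForest F) (h : codeF F = 0) :
    F = fun _ => PBTree.leaf := by
  funext i
  by_contra hne
  rcases hFi : F i with _ | ⟨l, r⟩
  · exact hne hFi
  · have := codeF_apply_offset_pos hF (jj := i) hFi
    rw [h] at this
    simp at this

lemma codeF_apply_zero_of_leaf {F : ℕ → PBTree} (hF : IsForest F)
    (h : F 0 = PBTree.leaf) : (codeF F) 0 = 0 := by
  have : F = consF PBTree.leaf (tailF F) := by rw [← h, consF_tailF]
  rw [this, codeF_cons_leaf (isForest_tail hF), mapDomain_succ_apply_zero]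

lemma codeF_node_of_apply_ne {F : ℕ → PBTree} (hF : IsForest F)
    (h : (codeF F) 0 ≠ 0) : ∃ l r, F 0 = PBTree.node l r := by
  rcases hF0 : F 0 with _ | ⟨l, r⟩
  · exact absurd (codeF_apply_zero_of_leaf hF hF0) h
  · exact ⟨l, r, rfl⟩

/-! ### Decoding -/

/-- Decode a code into a forest. -/
noncomputable def decode (c : ℕ →₀ ℕ) : ℕ → PBTree :=
  if hc : c = 0 then fun _ => PBTree.leaf
  else if h0 : c 0 = 0 then consF PBTree.leaf (decode (shiftD c))
  else
    let G := decode (c - Finsupp.single 0 1)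
    consF (PBTree.node (G 0) (G 1)) (fun i => G (i + 2))
termination_by mu c
decreasing_by
  · exact mu_shiftD c hc h0
  · exact mu_sub_single c h0

theorem decode_spec (c : ℕ →₀ ℕ) : IsForest (decode c) ∧ codeF (decode c) = c := by
  by_cases hc : c = 0
  · rw [decode, dif_pos hc]
    refine ⟨isForest_const, ?_⟩
    rw [codeF_eq (N := 0) (fun i _ => rfl), hc]
    simp
  · by_cases h0 : c 0 = 0
    · obtain ⟨ih1, ih2⟩ := decode_spec (shiftD c)
      rw [decode, dif_neg hc, dif_pos h0]
      exact ⟨isForest_cons ih1, by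
        rw [codeF_cons_leaf ih1, ih2, mapDomain_shiftD c h0]⟩
    · obtain ⟨ih1, ih2⟩ := decode_spec (c - Finsupp.single 0 1)
      rw [decode, dif_neg hc, dif_neg h0]
      set G := decode (c - Finsupp.single 0 1) with hGdef
      have htail : (fun i => G (i + 2)) = tailF (tailF G) := rfl
      have hG2 : consF (G 0) (consF (G 1) (fun i => G (i + 2))) = G := by
        funext i
        rcases i with _ | (_ | i) <;> rfl
      have hforest : IsForest (fun i => G (i + 2)) := by
        rw [htail]; exact isForest_tail (isForest_tail ih1)
      refine ⟨isForest_cons hforest, ?_⟩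
      rw [codeF_cons_node hforest, hG2, ih2, add_comm, sub_single_add c h0]
termination_by mu c
decreasing_by
  · exact mu_shiftD c hc h0
  · exact mu_sub_single c h0

theorem decode_codeF (F : ℕ → PBTree) (hF : IsForest F) : decode (codeF F) = F := by
  by_cases hc : codeF F = 0
  · rw [decode, dif_pos hc]
    exact (codeF_eq_zero hF hc).symm
  · by_cases h0 : (codeF F) 0 = 0
    · have hF0 : F 0 = PBTree.leaf := by
        rcases hF0 : F 0 with _ | ⟨l, r⟩
        · rfl
        · have := codeF_apply_offset_pos hF (jj := 0) hF0
          rw [offset_zero] at this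
          omega
      have hFeq : F = consF PBTree.leaf (tailF F) := by rw [← hF0, consF_tailF]
      have htf : IsForest (tailF F) := isForest_tail hF
      have hmap : codeF F = Finsupp.mapDomain Nat.succ (codeF (tailF F)) := by
        conv_lhs => rw [hFeq]
        exact codeF_cons_leaf htf
      have hsh : shiftD (codeF F) = codeF (tailF F) := by
        rw [hmap, shiftD_mapDomain]
      have hlt : mu (codeF (tailF F)) < mu (codeF F) := by
        rw [← hsh]; exact mu_shiftD _ hc h0
      have ih := decode_codeF (tailF F) htf
      rw [decode, dif_neg hc, dif_pos h0, hsh, ih, ← hFeq]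
    · obtain ⟨l, r, hF0⟩ := codeF_node_of_apply_ne hF h0
      have htf : IsForest (tailF F) := isForest_tail hF
      set F' := consF l (consF r (tailF F)) with hF'def
      have hF' : IsForest F' := isForest_cons (isForest_cons htf)
      have hFeq : F = consF (PBTree.node l r) (tailF F) := by rw [← hF0, consF_tailF]
      have hsum : codeF F = Finsupp.single 0 1 + codeF F' := by
        conv_lhs => rw [hFeq]
        exact codeF_cons_node htf
      have hsub : codeF F - Finsupp.single 0 1 = codeF F' := by
        rw [hsum]
        ext a
        simp only [Finsupp.tsub_apply, Finsupp.add_apply, Finsupp.single_apply]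
        rcases a with _ | a <;> simp
      have hlt : mu (codeF F') < mu (codeF F) := by
        rw [← hsub]; exact mu_sub_single _ h0
      have ih := decode_codeF F' hF'
      rw [decode, dif_neg hc, dif_neg h0]
      simp only [hsub, ih]
      funext i
      rcases i with _ | i
      · show PBTree.node (F' 0) (F' 1) = F 0
        rw [hF0]; rfl
      · show F' (i + 2) = F (i + 1)
        rfl
termination_by mu (codeF F)
decreasing_by
  · exact hlt
  · exact hlt

/-- The code map from indexed forests to finitely supported
sequences of nonnegative integers is a bijection. -/
theorem code_bijective :
    Function.Bijective (fun F : {F : ℕ → PBTree // IsForest F} => codeF F.1) := by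
  constructor
  · intro F G h
    apply Subtype.ext
    rw [← decode_codeF F.1 F.2, ← decode_codeF G.1 G.2]
    simp only at h
    rw [h]
  · intro c
    exact ⟨⟨decode c, (decode_spec c).1⟩, (decode_spec c).2⟩
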